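/- arXiv:1304.0142 — 2 statements merged into one kernel-verified Lean document; each statement's English description precedes it below -/
import Mathlib

section
/- The function f̃(x,y,z) = y(2+z) + qx²/((xy−1)(1+z)) defined on the open set U = {(xy−1)(1+z) ≠ 0} ⊂ ℂ³, with parameter q ≠ 0, has exactly 4 critical points: P₀ = (0, 0, −2) and Pᵢ = (2/ξᵢ, ξᵢ, 0) where ξᵢ ranges over the three roots of ξ³ = 4q. -/
/-- The function `f̃(x,y,z) = y(2+z) + qx²/((xy−1)(1+z))` on
`{(xy−1)(1+z) ≠ 0} ⊂ ℂ³`, with `q ≠ 0`, has exactly 4 critical points: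
`P₀ = (0,0,−2)` and `Pᵢ = (2/ξᵢ, ξᵢ, 0)` for the three roots `ξᵢ` of `ξ³ = 4q`. -/
theorem quadric_compactified_potential_critical_points (q : ℂ) (hq : q ≠ 0)
    (x y z : ℂ) (h : (x * y - 1) * (1 + z) ≠ 0) :
    (deriv (fun s : ℂ => y * (2 + z) + q * s ^ 2 / ((s * y - 1) * (1 + z))) x = 0 ∧
     deriv (fun s : ℂ => s * (2 + z) + q * x ^ 2 / ((x * s - 1) * (1 + z))) y = 0 ∧
     deriv (fun s : ℂ => y * (2 + s) + q * x ^ 2 / ((x * y - 1) * (1 + s))) z = 0) ↔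
    ((x = 0 ∧ y = 0 ∧ z = -2) ∨
     ∃ ξ : ℂ, ξ ^ 3 = 4 * q ∧ x = 2 / ξ ∧ y = ξ ∧ z = 0) := by
  obtain ⟨hA, hB⟩ := mul_ne_zero_iff.mp h
  have d1 : HasDerivAt (fun s : ℂ => y * (2 + z) + q * s ^ 2 / ((s * y - 1) * (1 + z)))
      ((q * (2 * x ^ 1) * ((x * y - 1) * (1 + z)) - q * x ^ 2 * (1 * y * (1 + z))) /
        ((x * y - 1) * (1 + z)) ^ 2) x := by
    have hu : HasDerivAt (fun s : ℂ => q * s ^ 2) (q * (2 * x ^ 1)) x :=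
      (hasDerivAt_pow 2 x).const_mul q
    have hv : HasDerivAt (fun s : ℂ => (s * y - 1) * (1 + z)) (1 * y * (1 + z)) x :=
      (((hasDerivAt_id x).mul_const y).sub_const 1).mul_const (1 + z)
    exact (hu.div hv h).const_add (y * (2 + z))
  have d2 : HasDerivAt (fun s : ℂ => s * (2 + z) + q * x ^ 2 / ((x * s - 1) * (1 + z)))
      (1 * (2 + z) + (0 * ((x * y - 1) * (1 + z)) - q * x ^ 2 * (x * 1 * (1 + z))) /
        ((x * y - 1) * (1 + z)) ^ 2) y := by
    have hu : HasDerivAt (fun _ : ℂ => q * x ^ 2) (0 : ℂ) y := hasDerivAt_const y _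
    have hv : HasDerivAt (fun s : ℂ => (x * s - 1) * (1 + z)) (x * 1 * (1 + z)) y :=
      (((hasDerivAt_id y).const_mul x).sub_const 1).mul_const (1 + z)
    exact ((hasDerivAt_id y).mul_const (2 + z)).add (hu.div hv h)
  have d3 : HasDerivAt (fun s : ℂ => y * (2 + s) + q * x ^ 2 / ((x * y - 1) * (1 + s)))
      (y * 1 + (0 * ((x * y - 1) * (1 + z)) - q * x ^ 2 * ((x * y - 1) * 1)) /
        ((x * y - 1) * (1 + z)) ^ 2) z := by
    have hu : HasDerivAt (fun _ : ℂ => q * x ^ 2) (0 : ℂ) z := hasDerivAt_const z _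
    have hv : HasDerivAt (fun s : ℂ => (x * y - 1) * (1 + s)) ((x * y - 1) * 1) z :=
      ((hasDerivAt_id z).const_add 1).const_mul (x * y - 1)
    exact (((hasDerivAt_id z).const_add 2).const_mul y).add (hu.div hv h)
  rw [d1.deriv, d2.deriv, d3.deriv]
  have h2 : ((x * y - 1) * (1 + z)) ^ 2 ≠ 0 := pow_ne_zero 2 h
  constructor
  · rintro ⟨e1, e2, e3⟩
    have E1 : q * (2 * x ^ 1) * ((x * y - 1) * (1 + z)) - q * x ^ 2 * (1 * y * (1 + z)) = 0 := by
      rcases div_eq_zero_iff.mp e1 with h' | h'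
      · exact h'
      · exact absurd h' h2
    have E2 : (2 + z) * ((x * y - 1) * (1 + z)) ^ 2 = q * x ^ 2 * (x * (1 + z)) := by
      field_simp at e2
      linear_combination (1 + z) * e2
    have E3 : y * ((x * y - 1) * (1 + z)) ^ 2 = q * x ^ 2 * (x * y - 1) := by
      rw [add_comm (y * 1), ← eq_neg_iff_add_eq_zero, div_eq_iff h2] at e3
      linear_combination e3
    have hfac : x * (x * y - 2) = 0 := by
      have hp : q * (1 + z) * (x * (x * y - 2)) = 0 := by linear_combination E1
      rcases mul_eq_zero.mp hp with h' | h'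
      · exact absurd h' (mul_ne_zero hq hB)
      · exact h'
    rcases mul_eq_zero.mp hfac with hx0 | hxy2
    · left
      subst hx0
      have hz : z = -2 := by
        have h' : (2 + z) * ((0 * y - 1) * (1 + z)) ^ 2 = 0 := by linear_combination E2
        rcases mul_eq_zero.mp h' with h'' | h''
        · linear_combination h''
        · exact absurd h'' h2
      have hy : y = 0 := by
        have h' : y * ((0 * y - 1) * (1 + z)) ^ 2 = 0 := by linear_combination E3
        rcases mul_eq_zero.mp h' with h'' | h''
        · exact h''
        · exact absurd h'' h2
      exact ⟨rfl, hy, hz⟩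
    · right
      -- x*y = 2, so A = 1
      have hxy : x * y = 2 := by linear_combination hxy2
      have hA1 : x * y - 1 = 1 := by linear_combination hxy
      have hx : x ≠ 0 := by
        intro h0; rw [h0] at hxy; simp at hxy
      -- E2 becomes (2+z)*(1+z)^2 = q*x^3*(1+z), E3 becomes y*(1+z)^2 = q*x^2
      have E2' : (2 + z) * (1 + z) = q * x ^ 3 := by
        have : (2 + z) * (1 + z) ^ 2 = q * x ^ 3 * (1 + z) := by
          rw [hA1] at E2; linear_combination E2
        have := mul_right_cancel₀ hB (by linear_combination this :
          ((2 + z) * (1 + z)) * (1 + z) = (q * x ^ 3) * (1 + z))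
        exact this
      have E3' : y * (1 + z) ^ 2 = q * x ^ 2 := by
        rw [hA1] at E3; linear_combination E3
      -- y = 2/x, so 2*(1+z)^2 = q*x^3 = (2+z)*(1+z)
      have key : 2 * (1 + z) ^ 2 = (2 + z) * (1 + z) := by
        have : x * (y * (1 + z) ^ 2) = x * (q * x ^ 2) := by rw [E3']
        calc 2 * (1 + z) ^ 2 = (x * y) * (1 + z) ^ 2 := by rw [hxy]
          _ = q * x ^ 3 := by ring_nf; ring_nf at this; linear_combination this
          _ = (2 + z) * (1 + z) := E2'.symm
      have hz0 : z = 0 := by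
        have : (1 + z) * z = 0 := by linear_combination key
        rcases mul_eq_zero.mp this with h' | h'
        · exact absurd h' hB
        · exact h'
      subst hz0
      have hqx3 : q * x ^ 3 = 2 := by linear_combination -E2'
      have hy3 : y ^ 3 = 4 * q := by
        have hx3 : x ^ 3 ≠ 0 := pow_ne_zero 3 hx
        have : y ^ 3 * x ^ 3 = (4 * q) * x ^ 3 := by
          calc y ^ 3 * x ^ 3 = (x * y) ^ 3 := by ring
            _ = 8 := by rw [hxy]; norm_num
            _ = 4 * (q * x ^ 3) := by rw [hqx3]; norm_num
            _ = (4 * q) * x ^ 3 := by ring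
        exact mul_right_cancel₀ hx3 this
      refine ⟨y, hy3, ?_, rfl, rfl⟩
      have hy : y ≠ 0 := by
        intro h0; rw [h0] at hxy; simp at hxy
      field_simp
      linear_combination hxy
  · rintro (⟨hx, hy, hz⟩ | ⟨ξ, hξ3, hx, hy, hz⟩)
    · subst hx; subst hy; subst hz
      norm_num
    · have hξ : ξ ≠ 0 := by
        intro h0
        apply hq
        have h4 : (4 : ℂ) * q = 0 := by rw [← hξ3, h0]; ring
        simpa using h4
      subst hx; subst hy; subst hz
      have hA1 : 2 / y * y - 1 = 1 := by field_simp; norm_num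
      refine ⟨?_, ?_, ?_⟩
      · rw [div_eq_zero_iff]
        left
        rw [hA1]
        field_simp
        ring
      · rw [hA1]
        field_simp
        linear_combination 2 * hξ3
      · rw [hA1]
        field_simp
        linear_combination hξ3
end

section
/- Every critical point of the function g(x,y,z) = y(z+1) + qx²/((xy−1)z) on the open set {(xy−1)z ≠ 0} ⊂ ℂ³ lies on the hypersurface {xy − z − 1 = 0}. -/
/-- Every critical point of `g(x,y,z) = y(z+1) + qx²/((xy−1)z)` on
`{(xy−1)z ≠ 0} ⊂ ℂ³` lies on the hypersurface `{xy − z − 1 = 0}`. -/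
theorem quadric_g_critical_points_on_hypersurface (q : ℂ) (hq : q ≠ 0)
    (x y z : ℂ) (h : (x * y - 1) * z ≠ 0)
    (hx : deriv (fun s : ℂ => y * (z + 1) + q * s ^ 2 / ((s * y - 1) * z)) x = 0)
    (hy : deriv (fun s : ℂ => s * (z + 1) + q * x ^ 2 / ((x * s - 1) * z)) y = 0)
    (hz : deriv (fun s : ℂ => y * (s + 1) + q * x ^ 2 / ((x * y - 1) * s)) z = 0) :
    x * y - z - 1 = 0 := by
  have hu : x * y - 1 ≠ 0 := fun h0 => h (by rw [h0, zero_mul])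
  have hz0 : z ≠ 0 := fun h0 => h (by rw [h0, mul_zero])
  -- derivative in x
  have d1 : HasDerivAt (fun s : ℂ => y * (z + 1) + q * s ^ 2 / ((s * y - 1) * z))
      (0 + (q * (↑2 * x ^ 1) * ((x * y - 1) * z) - q * x ^ 2 * (1 * y * z))
        / ((x * y - 1) * z) ^ 2) x :=
    (hasDerivAt_const x (y * (z + 1))).add
      ((((hasDerivAt_pow 2 x).const_mul q).div
        ((((hasDerivAt_id x).mul_const y).sub_const 1).mul_const z) h))
  have E1 : q * (2 * x) * ((x * y - 1) * z) - q * x ^ 2 * (y * z) = 0 := by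
    have := d1.deriv
    rw [hx] at this
    have h2 : ((x * y - 1) * z) ^ 2 ≠ 0 := pow_ne_zero _ h
    field_simp at this
    linear_combination -z * this
  -- derivative in y
  have d2 : HasDerivAt (fun s : ℂ => s * (z + 1) + q * x ^ 2 / ((x * s - 1) * z))
      (1 * (z + 1) + (0 * ((x * y - 1) * z) - q * x ^ 2 * ((0 * y + x * 1) * z))
        / ((x * y - 1) * z) ^ 2) y :=
    ((hasDerivAt_id y).mul_const (z + 1)).add
      ((hasDerivAt_const y (q * x ^ 2)).div
        ((((hasDerivAt_const y x).mul (hasDerivAt_id y)).sub_const 1).mul_const z) h)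
  have E2 : (z + 1) * ((x * y - 1) * z) ^ 2 = q * x ^ 2 * (x * z) := by
    have := d2.deriv
    rw [hy] at this
    have h2 : ((x * y - 1) * z) ^ 2 ≠ 0 := pow_ne_zero _ h
    field_simp at this
    linear_combination -z * this
  -- derivative in z
  have d3 : HasDerivAt (fun s : ℂ => y * (s + 1) + q * x ^ 2 / ((x * y - 1) * s))
      (y * 1 + (0 * ((x * y - 1) * z) - q * x ^ 2 * ((x * y - 1) * 1))
        / ((x * y - 1) * z) ^ 2) z :=
    (((hasDerivAt_id z).add_const 1).const_mul y).add
      ((hasDerivAt_const z (q * x ^ 2)).div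
        ((hasDerivAt_id z).const_mul (x * y - 1)) h)
  have E3 : y * ((x * y - 1) * z) ^ 2 = q * x ^ 2 * (x * y - 1) := by
    have := d3.deriv
    rw [hz] at this
    have h2 : ((x * y - 1) * z) ^ 2 ≠ 0 := pow_ne_zero _ h
    have hu' : y * x - 1 ≠ 0 := by rwa [mul_comm]
    field_simp at this
    linear_combination -(x * y - 1) * this
  -- E1 gives x * (x*y - 2) = 0
  have hqz : q * z ≠ 0 := mul_ne_zero hq hz0
  have key : x * (x * y - 2) = 0 := by
    apply mul_left_cancel₀ hqz
    linear_combination E1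
  rcases mul_eq_zero.mp key with hx0 | hxy2
  · -- x = 0
    rw [hx0] at E2
    have e : (z + 1) * z ^ 2 = 0 := by linear_combination E2
    rcases mul_eq_zero.mp e with h1 | h1
    · rw [hx0]; linear_combination -h1
    · exact absurd (by simpa using h1) hz0
  · -- x * y = 2
    have hxy : x * y = 2 := by linear_combination hxy2
    have hu1 : x * y - 1 = 1 := by rw [hxy]; ring
    rw [hu1] at E2 E3
    have e : (z - 1) * z ^ 2 = 0 := by
      linear_combination -E2 + x * z * E3 - z ^ 3 * hxy
    rcases mul_eq_zero.mp e with h1 | h1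
    · rw [hxy]; linear_combination -h1
    · exact absurd (by simpa using h1) hz0
end
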